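/- For any ε, δ ∈ (0,1) and Δ ∈ ℕ with Δ ≥ 1, set p = e^{−0.2ε/Δ} and r = 3(1 + log(1/δ)). Then the mechanism that maps a nonnegative integer a to the distribution of a + Z, where Z ∼ NB(r, p), is (ε, δ)-differentially private for Δ-summation: for all nonnegative integers a, a' with |a − a'| ≤ Δ and every subset S of the integers, Pr[a + Z ∈ S] ≤ e^ε · Pr[a' + Z ∈ S] + δ. -/

import Mathlib

open scoped ENNReal

/-- Probability mass function of the negative binomial distribution `NB(r, p)`:
`Pr(X = k) = (Γ(k+r)/(k!·Γ(r))) · p^k · (1−p)^r`. -/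
noncomputable def nbPMF (r p : ℝ) (k : ℕ) : ℝ :=
  (Real.Gamma (k + r) / (Nat.factorial k * Real.Gamma r)) * p ^ k *
    Real.rpow (1 - p) r

/-- Distribution (on `ℤ`) of `a + Z` where `Z ∼ NB(r, p)`. -/
noncomputable def shiftedNB (r p : ℝ) (a : ℕ) (m : ℤ) : ℝ≥0∞ :=
  if (a : ℤ) ≤ m then ENNReal.ofReal (nbPMF r p (m - (a : ℤ)).toNat) else 0

/-- The probability mass assigned by a distribution to a subset `S`. -/
noncomputable def setProb {Ω : Type*} (ν : Ω → ℝ≥0∞) (S : Set Ω) : ℝ≥0∞ :=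
  ∑' x : S, ν x

/-! ### Auxiliary lemmas -/

/-- `Γ(k+r)/(k!·Γ(r))` as a finite product. -/
noncomputable def nbG (r : ℝ) (k : ℕ) : ℝ := ∏ j ∈ Finset.range k, ((j + r) / (j + 1))

lemma nbG_pos {r : ℝ} (hr : 0 < r) (k : ℕ) : 0 < nbG r k :=
  Finset.prod_pos fun j _ => div_pos (by positivity) (by positivity)

lemma nbG_succ (r : ℝ) (k : ℕ) : nbG r (k + 1) = nbG r k * ((k + r) / (k + 1)) :=
  Finset.prod_range_succ _ _

lemma Gamma_nat_add {r : ℝ} (hr : 0 < r) (k : ℕ) :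
    Real.Gamma (k + r) = (∏ j ∈ Finset.range k, ((j : ℝ) + r)) * Real.Gamma r := by
  induction k with
  | zero => simp
  | succ n ih =>
    have h1 : ((n + 1 : ℕ) : ℝ) + r = ((n : ℝ) + r) + 1 := by push_cast; ring
    have h2 : (n : ℝ) + r ≠ 0 := by positivity
    rw [h1, Real.Gamma_add_one h2, ih, Finset.prod_range_succ]
    ring

lemma nbPMF_eq {r : ℝ} (hr : 0 < r) (p : ℝ) (k : ℕ) :
    nbPMF r p k = nbG r k * p ^ k * (1 - p) ^ r := by
  have hfac : ((Nat.factorial k : ℝ)) = ∏ j ∈ Finset.range k, ((j : ℝ) + 1) := by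
    induction k with
    | zero => simp
    | succ n ih => rw [Finset.prod_range_succ, ← ih, Nat.factorial_succ]; push_cast; ring
  have hΓ : (0 : ℝ) < Real.Gamma r := Real.Gamma_pos_of_pos hr
  have hG : nbG r k = Real.Gamma (k + r) / (Nat.factorial k) / Real.Gamma r := by
    rw [Gamma_nat_add hr, hfac, nbG, Finset.prod_div_distrib]
    field_simp
  unfold nbPMF
  rw [hG, show Real.rpow (1 - p) r = (1 - p) ^ r from rfl]
  ring

section
variable {r p : ℝ} (hr : 0 < r) (hp0 : 0 < p) (hp1 : p < 1)
include hr hp0 hp1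

lemma nbPMF_pos (k : ℕ) : 0 < nbPMF r p k := by
  rw [nbPMF_eq hr]
  have h1 : (0:ℝ) < 1 - p := by linarith
  have := nbG_pos hr (r := r) k
  positivity

omit hp0 hp1 in
lemma nbPMF_add (k d : ℕ) :
    nbPMF r p (k + d) =
      nbPMF r p k * (∏ j ∈ Finset.range d, (((k : ℝ) + j + r) / ((k : ℝ) + j + 1))) * p ^ d := by
  rw [nbPMF_eq hr, nbPMF_eq hr, nbG, nbG, Finset.prod_range_add]
  have : ∀ j ∈ Finset.range d, (((k + j : ℕ) : ℝ) + r) / ((k + j : ℕ) + 1)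
      = ((k : ℝ) + j + r) / ((k : ℝ) + j + 1) := by
    intro j _; push_cast; ring
  rw [Finset.prod_congr rfl this, pow_add]
  ring

/-- lower bound: shifting up by `d` loses at most a factor `p^d`. -/
lemma nbPMF_shift_ge (hr1 : 1 ≤ r) (k d : ℕ) :
    nbPMF r p k * p ^ d ≤ nbPMF r p (k + d) := by
  rw [nbPMF_add hr]
  have h1 : 1 ≤ ∏ j ∈ Finset.range d, (((k : ℝ) + j + r) / ((k : ℝ) + j + 1)) := by
    calc (1:ℝ) = ∏ _j ∈ Finset.range d, (1:ℝ) := by simp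
      _ ≤ _ := by
          refine Finset.prod_le_prod (fun _ _ => zero_le_one) ?_
          intro j _
          rw [le_div_iff₀ (by positivity)]
          have h1j : (0:ℝ) ≤ (j:ℝ) := Nat.cast_nonneg j
          have h1k : (0:ℝ) ≤ (k:ℝ) := Nat.cast_nonneg k
          linarith
  have h2 := (nbPMF_pos hr hp0 hp1 k).le
  nlinarith [pow_pos hp0 d, mul_le_mul_of_nonneg_right h1 (mul_nonneg h2 (pow_pos hp0 d).le)]

/-- upper bound: if `k ≥ K` with `r - 1 ≤ c * (K + 1)`, shifting up by `d`
gains at most a factor `exp (c * d)`. -/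
lemma nbPMF_shift_le {c : ℝ} (hc : 0 ≤ c) {K : ℕ} (hK : r - 1 ≤ c * (K + 1))
    {k : ℕ} (hkK : K ≤ k) (d : ℕ) :
    nbPMF r p (k + d) ≤ Real.exp (c * d) * nbPMF r p k := by
  rw [nbPMF_add hr]
  have h1 : ∏ j ∈ Finset.range d, (((k : ℝ) + j + r) / ((k : ℝ) + j + 1))
      ≤ Real.exp c ^ d := by
    calc ∏ j ∈ Finset.range d, (((k : ℝ) + j + r) / ((k : ℝ) + j + 1))
        ≤ ∏ _j ∈ Finset.range d, Real.exp c := ?_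
      _ = Real.exp c ^ d := by rw [Finset.prod_const, Finset.card_range]
    apply Finset.prod_le_prod
    · intro j _; positivity
    · intro j _
      rw [div_le_iff₀ (by positivity)]
      have hKk : (K : ℝ) ≤ k := by exact_mod_cast hkK
      have hj : (0:ℝ) ≤ j := j.cast_nonneg
      have h2 : r - 1 ≤ c * ((k:ℝ) + j + 1) := le_trans hK (by nlinarith)
      have h3 : 1 + c ≤ Real.exp c := Real.add_one_le_exp c |>.trans_eq' (by ring)
      nlinarith
  have h2 : p ^ d ≤ 1 := pow_le_one₀ hp0.le hp1.le
  have h3 := (nbPMF_pos hr hp0 hp1 k).le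
  have h4 : (0:ℝ) ≤ Real.exp c ^ d := by positivity
  calc nbPMF r p k * (∏ j ∈ Finset.range d, (((k : ℝ) + j + r) / ((k : ℝ) + j + 1))) * p ^ d
      ≤ nbPMF r p k * Real.exp c ^ d * 1 := by
        apply mul_le_mul (mul_le_mul_of_nonneg_left h1 h3) h2 (by positivity) (by positivity)
    _ = Real.exp (c * d) * nbPMF r p k := by
        rw [mul_comm c (d:ℝ), Real.exp_nat_mul]; ring

end

lemma sum_deriv_le {r : ℝ} (hr : 1 ≤ r) {y : ℝ} (hy0 : 0 < y) (hy1 : y < 1) (n : ℕ) :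
    (1 - y) * ∑ k ∈ Finset.range n, nbG r k * (k * y ^ (k - 1)) ≤
      r * ∑ k ∈ Finset.range n, nbG r k * y ^ k := by
  have hr0 : (0:ℝ) < r := lt_of_lt_of_le one_pos hr
  rcases n with _ | m
  · simp [hr0.le]
  rw [← mul_le_mul_iff_right₀ hy0]
  set S := ∑ k ∈ Finset.range (m + 1), nbG r k * y ^ k with hS
  set T := ∑ k ∈ Finset.range (m + 1), nbG r k * ((k : ℝ) * y ^ k) with hTdef
  have hT : y * ∑ k ∈ Finset.range (m + 1), nbG r k * (k * y ^ (k - 1)) = T := by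
    rw [hTdef, Finset.mul_sum]
    refine Finset.sum_congr rfl fun k _ => ?_
    cases k with
    | zero => simp
    | succ j => simp only [Nat.succ_sub_one]; rw [pow_succ]; push_cast; ring
  have hT2 : T = ∑ k ∈ Finset.range m, (((k : ℝ) + r) * nbG r k) * y ^ (k + 1) := by
    rw [hTdef, Finset.sum_range_succ']
    simp only [Nat.cast_zero, zero_mul, mul_zero, add_zero]
    refine Finset.sum_congr rfl fun k _ => ?_
    have hk1 : ((k : ℝ) + 1) ≠ 0 := by positivity
    rw [nbG_succ]
    push_cast
    field_simp
  have h3 : y * T + y * (r * S) =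
      ∑ k ∈ Finset.range (m + 1), (((k : ℝ) + r) * nbG r k) * y ^ (k + 1) := by
    rw [hTdef, hS, Finset.mul_sum, Finset.mul_sum, Finset.mul_sum, ← Finset.sum_add_distrib]
    refine Finset.sum_congr rfl fun k _ => ?_
    rw [pow_succ]
    ring
  have h4 : ∑ k ∈ Finset.range m, (((k : ℝ) + r) * nbG r k) * y ^ (k + 1) ≤
      ∑ k ∈ Finset.range (m + 1), (((k : ℝ) + r) * nbG r k) * y ^ (k + 1) := by
    rw [Finset.sum_range_succ]
    have h5 : (0:ℝ) ≤ (((m : ℝ) + r) * nbG r m) * y ^ (m + 1) := by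
      have := nbG_pos hr0 (r := r) m
      positivity
    linarith
  calc y * ((1 - y) * ∑ k ∈ Finset.range (m + 1), nbG r k * (k * y ^ (k - 1)))
      = (1 - y) * (y * ∑ k ∈ Finset.range (m + 1), nbG r k * (k * y ^ (k - 1))) := by ring
    _ = (1 - y) * T := by rw [hT]
    _ = T - y * T := by ring
    _ ≤ y * (r * S) := by rw [hT2] at *; linarith [h3, h4]

lemma partial_binomial {r : ℝ} (hr : 1 ≤ r) {x : ℝ} (hx0 : 0 ≤ x) (hx1 : x < 1) (n : ℕ) :
    (1 - x) ^ r * ∑ k ∈ Finset.range n, nbG r k * x ^ k ≤ 1 := by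
  have hr0 : (0:ℝ) < r := lt_of_lt_of_le one_pos hr
  rcases n with _ | m
  · simp
  set n := m + 1 with hn
  set f : ℝ → ℝ := fun y => (1 - y) ^ r * ∑ k ∈ Finset.range n, nbG r k * y ^ k with hf
  have hderiv : ∀ y : ℝ, HasDerivAt f
      (r * (1 - y) ^ (r - 1) * (-1) * (∑ k ∈ Finset.range n, nbG r k * y ^ k) +
        (1 - y) ^ r * (∑ k ∈ Finset.range n, nbG r k * ((k : ℝ) * y ^ (k - 1)))) y := by
    intro y
    have h1 : HasDerivAt (fun y : ℝ => (1 - y) ^ r) (r * (1 - y) ^ (r - 1) * (-1)) y := by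
      have ha : HasDerivAt (fun y : ℝ => 1 - y) (-1) y := (hasDerivAt_id y).const_sub 1
      exact (Real.hasDerivAt_rpow_const (Or.inr hr)).comp y ha
    have h2 : HasDerivAt (fun y : ℝ => ∑ k ∈ Finset.range n, nbG r k * y ^ k)
        (∑ k ∈ Finset.range n, nbG r k * ((k : ℝ) * y ^ (k - 1))) y := by
      apply HasDerivAt.fun_sum
      intro k _
      exact (hasDerivAt_pow k y).const_mul (nbG r k)
    exact h1.mul h2
  have hmono : AntitoneOn f (Set.Icc 0 x) := by
    apply antitoneOn_of_deriv_nonpos (convex_Icc 0 x)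
    · exact fun y _ => ((hderiv y).differentiableAt).continuousAt.continuousWithinAt
    · intro y hy
      exact ((hderiv y).differentiableAt).differentiableWithinAt
    · intro y hy
      rw [interior_Icc] at hy
      rw [(hderiv y).deriv]
      have hy0 : 0 < y := hy.1
      have hy1 : y < 1 := lt_of_lt_of_le hy.2 hx1.le
      have h1y : (0:ℝ) < 1 - y := by linarith
      have hkey := sum_deriv_le hr hy0 hy1 n
      have hsplit : (1 - y) ^ r = (1 - y) ^ (r - 1) * (1 - y) := by
        rw [← Real.rpow_add_one (ne_of_gt h1y) (r - 1)]
        ring_nf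
      have hpow : (0:ℝ) ≤ (1 - y) ^ (r - 1) := Real.rpow_nonneg h1y.le _
      rw [hsplit]
      calc r * (1 - y) ^ (r - 1) * (-1) * (∑ k ∈ Finset.range n, nbG r k * y ^ k) +
            (1 - y) ^ (r - 1) * (1 - y) *
              (∑ k ∈ Finset.range n, nbG r k * ((k : ℝ) * y ^ (k - 1)))
          = (1 - y) ^ (r - 1) *
              ((1 - y) * (∑ k ∈ Finset.range n, nbG r k * ((k : ℝ) * y ^ (k - 1)))
              - r * (∑ k ∈ Finset.range n, nbG r k * y ^ k)) := by ring
        _ ≤ 0 := mul_nonpos_of_nonneg_of_nonpos hpow (by linarith)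
  have h0 : f 0 = 1 := by
    rw [hf]
    simp only [sub_zero, Real.one_rpow, one_mul, hn]
    rw [Finset.sum_range_succ']
    simp [nbG]
  have := hmono (Set.left_mem_Icc.mpr hx0) (Set.right_mem_Icc.mpr hx0) hx0
  rw [h0] at this
  exact this

lemma nbPMF_sum_le {r p : ℝ} (hr : 1 ≤ r) (hp0 : 0 < p) (hp1 : p < 1) (M : ℕ) :
    ∑ k ∈ Finset.range M, nbPMF r p k ≤ p⁻¹ ^ M * (1 + p) ^ (-r) := by
  have hr0 : (0:ℝ) < r := lt_of_lt_of_le one_pos hr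
  have h1p : (0:ℝ) < 1 - p := by linarith
  have h1p2 : (0:ℝ) < 1 - p ^ 2 := by nlinarith
  have hp2a : (0:ℝ) ≤ p ^ 2 := by positivity
  have hp2b : p ^ 2 < 1 := by nlinarith
  have hstep : ∀ k ∈ Finset.range M, nbPMF r p k ≤
      p⁻¹ ^ M * (nbG r k * (p ^ 2) ^ k * (1 - p) ^ r) := by
    intro k hk
    rw [nbPMF_eq hr0]
    have hpk : p ^ k = (p ^ 2) ^ k * p⁻¹ ^ k := by
      rw [← mul_pow]
      congr 1
      field_simp
    rw [hpk]
    have hmono : p⁻¹ ^ k ≤ p⁻¹ ^ M := by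
      apply pow_le_pow_right₀ (one_le_inv_iff₀.mpr ⟨hp0, hp1.le⟩)
      exact (Finset.mem_range.mp hk).le
    have hnn : (0:ℝ) ≤ nbG r k * (p ^ 2) ^ k * (1 - p) ^ r := by
      have := nbG_pos hr0 (r := r) k
      positivity
    calc nbG r k * ((p ^ 2) ^ k * p⁻¹ ^ k) * (1 - p) ^ r
        = (nbG r k * (p ^ 2) ^ k * (1 - p) ^ r) * p⁻¹ ^ k := by ring
      _ ≤ (nbG r k * (p ^ 2) ^ k * (1 - p) ^ r) * p⁻¹ ^ M :=
          mul_le_mul_of_nonneg_left hmono hnn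
      _ = p⁻¹ ^ M * (nbG r k * (p ^ 2) ^ k * (1 - p) ^ r) := by ring
  have h2 : ∑ k ∈ Finset.range M, nbG r k * (p ^ 2) ^ k ≤ ((1 - p ^ 2) ^ r)⁻¹ := by
    have hbin := partial_binomial hr hp2a hp2b M
    have hpos : (0:ℝ) < (1 - p ^ 2) ^ r := Real.rpow_pos_of_pos h1p2 r
    rw [← mul_le_mul_iff_right₀ hpos, mul_inv_cancel₀ (ne_of_gt hpos)]
    exact hbin
  calc ∑ k ∈ Finset.range M, nbPMF r p k
      ≤ ∑ k ∈ Finset.range M, p⁻¹ ^ M * (nbG r k * (p ^ 2) ^ k * (1 - p) ^ r) :=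
        Finset.sum_le_sum hstep
    _ = p⁻¹ ^ M * ((1 - p) ^ r * ∑ k ∈ Finset.range M, nbG r k * (p ^ 2) ^ k) := by
        rw [Finset.mul_sum, Finset.mul_sum]
        exact Finset.sum_congr rfl fun k _ => by ring
    _ ≤ p⁻¹ ^ M * ((1 - p) ^ r * ((1 - p ^ 2) ^ r)⁻¹) := by
        apply mul_le_mul_of_nonneg_left _ (by positivity)
        exact mul_le_mul_of_nonneg_left h2 (Real.rpow_nonneg h1p.le r)
    _ = p⁻¹ ^ M * (1 + p) ^ (-r) := by
        congr 1
        have hfac : 1 - p ^ 2 = (1 - p) * (1 + p) := by ring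
        rw [hfac, Real.mul_rpow h1p.le (by linarith), mul_inv,
          ← mul_assoc, mul_inv_cancel₀ (ne_of_gt (Real.rpow_pos_of_pos h1p r)), one_mul,
          Real.rpow_neg (by linarith)]

lemma exp_55_le : Real.exp 0.55 ≤ 1.8 := by
  have h := Real.exp_bound' (x := 0.55) (by norm_num) (by norm_num) (n := 4) (by norm_num)
  refine h.trans ?_
  norm_num [Finset.sum_range_succ, Nat.factorial]

set_option maxHeartbeats 1000000 in
/-- For `ε, δ ∈ (0,1)`, `Δ ≥ 1`, `p = e^{−0.2ε/Δ}` and `r = 3(1 + log(1/δ))`, the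
mechanism `a ↦ a + NB(r, p)` is `(ε, δ)`-differentially private for `Δ`-summation:
for all nonnegative integers `a, a'` with `|a − a'| ≤ Δ` and every `S ⊆ ℤ`,
`Pr[a + Z ∈ S] ≤ e^ε · Pr[a' + Z ∈ S] + δ`. -/
theorem nb_mechanism_dp_summation
    (ε δ : ℝ) (hε : ε ∈ Set.Ioo (0 : ℝ) 1) (hδ : δ ∈ Set.Ioo (0 : ℝ) 1)
    (Δ : ℕ) (hΔ : 1 ≤ Δ)
    (p r : ℝ)
    (hp : p = Real.exp (-(0.2 * ε / (Δ : ℝ))))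
    (hr : r = 3 * (1 + Real.log (1 / δ)))
    (a a' : ℕ) (hdiff : |(a : ℤ) - (a' : ℤ)| ≤ (Δ : ℤ))
    (S : Set ℤ) :
    setProb (shiftedNB r p a) S ≤
      ENNReal.ofReal (Real.exp ε) * setProb (shiftedNB r p a') S +
        ENNReal.ofReal δ := by
  obtain ⟨hε0, hε1⟩ := hε
  obtain ⟨hδ0, hδ1⟩ := hδ
  have hΔ0 : (0:ℝ) < Δ := by exact_mod_cast Nat.lt_of_lt_of_le Nat.zero_lt_one hΔ
  have hΔ1 : (1:ℝ) ≤ Δ := by exact_mod_cast hΔ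
  set L := Real.log (1 / δ) with hL
  have hL0 : 0 ≤ L := Real.log_nonneg (one_le_one_div hδ0 hδ1.le)
  have hr3 : (3:ℝ) ≤ r := by rw [hr]; linarith
  have hr1 : (1:ℝ) ≤ r := by linarith
  have hr0 : (0:ℝ) < r := by linarith
  have hx0pos : (0:ℝ) < 0.2 * ε / Δ := by positivity
  have hx0le : 0.2 * ε / Δ ≤ 0.2 := by
    rw [div_le_iff₀ hΔ0]; nlinarith
  have hp0 : 0 < p := by rw [hp]; exact Real.exp_pos _
  have hp1 : p < 1 := by rw [hp, Real.exp_lt_one_iff]; linarith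
  rw [abs_le] at hdiff
  rcases le_or_gt (a' : ℤ) (a : ℤ) with hcase | hcase
  · -- `a' ≤ a`: pointwise bound, no δ needed
    set d : ℕ := a - a' with hd
    have hda : a = a' + d := by omega
    have hdΔ : d ≤ Δ := by omega
    have hpt : ∀ m : ℤ, shiftedNB r p a m ≤
        ENNReal.ofReal (Real.exp ε) * shiftedNB r p a' m := by
      intro m
      unfold shiftedNB
      by_cases hm : (a : ℤ) ≤ m
      · rw [if_pos hm, if_pos (le_trans (by exact_mod_cast hcase) hm)]
        have hk : (m - (a' : ℤ)).toNat = (m - (a : ℤ)).toNat + d := by omega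
        rw [hk, ← ENNReal.ofReal_mul (Real.exp_nonneg ε)]
        apply ENNReal.ofReal_le_ofReal
        set k := (m - (a : ℤ)).toNat
        have h1 := nbPMF_shift_ge hr0 hp0 hp1 hr1 k d
        have h2 : Real.exp (-ε) ≤ p ^ d := by
          rw [hp, ← Real.exp_nat_mul]
          apply Real.exp_le_exp.mpr
          have hdΔ' : (d:ℝ) ≤ Δ := by exact_mod_cast hdΔ
          have key : (d:ℝ) * (0.2 * ε / Δ) ≤ ε := by
            rw [show (d:ℝ) * (0.2 * ε / Δ) = (d * (0.2 * ε)) / Δ from by ring,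
              div_le_iff₀ hΔ0]
            nlinarith
          nlinarith
        have h3 := (nbPMF_pos hr0 hp0 hp1 k).le
        calc nbPMF r p k = Real.exp ε * (Real.exp (-ε) * nbPMF r p k) := by
              rw [← mul_assoc, ← Real.exp_add]; simp
          _ ≤ Real.exp ε * (p ^ d * nbPMF r p k) :=
              mul_le_mul_of_nonneg_left (mul_le_mul_of_nonneg_right h2 h3) (Real.exp_nonneg ε)
          _ = Real.exp ε * (nbPMF r p k * p ^ d) := by ring
          _ ≤ Real.exp ε * nbPMF r p (k + d) :=
              mul_le_mul_of_nonneg_left h1 (Real.exp_nonneg ε)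
      · rw [if_neg hm]
        exact zero_le
    calc setProb (shiftedNB r p a) S
        ≤ ∑' m : S, ENNReal.ofReal (Real.exp ε) * shiftedNB r p a' m :=
          ENNReal.tsum_le_tsum fun m => hpt m
      _ = ENNReal.ofReal (Real.exp ε) * setProb (shiftedNB r p a') S := ENNReal.tsum_mul_left
      _ ≤ _ := self_le_add_right _ _
  · -- `a < a'`: need the δ term
    set d : ℕ := a' - a with hd
    have hda : a' = a + d := by omega
    have hd1 : 1 ≤ d := by omega
    have hdΔ : d ≤ Δ := by omega
    set K : ℕ := ⌈r * Δ / ε⌉₊ with hK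
    set M : ℕ := K + Δ with hM
    have hKge : r * Δ / ε ≤ K := Nat.le_ceil _
    have hKle : (K:ℝ) ≤ r * Δ / ε + 1 := (Nat.ceil_lt_add_one (by positivity)).le
    have hgood : ∀ k' : ℕ, K ≤ k' → nbPMF r p (k' + d) ≤ Real.exp ε * nbPMF r p k' := by
      intro k' hk'
      have hc : (0:ℝ) ≤ ε / Δ := by positivity
      have hKcond : r - 1 ≤ (ε / Δ) * ((K:ℝ) + 1) := by
        have h1 : r * Δ ≤ K * ε := (div_le_iff₀ hε0).mp hKge
        rw [show (ε / Δ) * ((K:ℝ) + 1) = (ε * (K + 1)) / Δ from by ring, le_div_iff₀ hΔ0]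
        nlinarith
      have h1 := nbPMF_shift_le hr0 hp0 hp1 hc hKcond hk' d
      refine h1.trans (mul_le_mul_of_nonneg_right ?_ (nbPMF_pos hr0 hp0 hp1 k').le)
      apply Real.exp_le_exp.mpr
      have hdΔ' : (d:ℝ) ≤ Δ := by exact_mod_cast hdΔ
      rw [show (ε / Δ) * (d:ℝ) = (ε * d) / Δ from by ring, div_le_iff₀ hΔ0]
      nlinarith
    set bad : ℤ → ℝ≥0∞ := fun m => if m < (a:ℤ) + M then shiftedNB r p a m else 0 with hbad
    have hpt : ∀ m : ℤ, shiftedNB r p a m ≤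
        ENNReal.ofReal (Real.exp ε) * shiftedNB r p a' m + bad m := by
      intro m
      by_cases hm : m < (a:ℤ) + M
      · have h1 : bad m = shiftedNB r p a m := if_pos hm
        rw [h1]
        exact le_add_self
      · push_neg at hm
        have h1 : bad m = 0 := if_neg (not_lt.mpr hm)
        rw [h1, add_zero]
        unfold shiftedNB
        have hma : (a:ℤ) ≤ m := by omega
        have hma' : (a':ℤ) ≤ m := by omega
        rw [if_pos hma, if_pos hma']
        have hsplit : (m - (a:ℤ)).toNat = (m - (a':ℤ)).toNat + d := by omega
        have hk'K : K ≤ (m - (a':ℤ)).toNat := by omega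
        rw [hsplit, ← ENNReal.ofReal_mul (Real.exp_nonneg ε)]
        exact ENNReal.ofReal_le_ofReal (hgood _ hk'K)
    have hbadsum : ∑' m : S, bad m ≤ ENNReal.ofReal δ := by
      have hstep1 : ∑' m : S, bad m ≤ ∑' m : ℤ, bad m := by
        rw [tsum_subtype S bad]
        exact ENNReal.tsum_le_tsum fun m => Set.indicator_le_self S bad m
      have hstep2 : ∑' m : ℤ, bad m =
          ∑ k ∈ Finset.range M, ENNReal.ofReal (nbPMF r p k) := by
        have h0 : ∀ m ∉ (Finset.range M).image (fun k : ℕ => (a:ℤ) + k), bad m = 0 := by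
          intro m hm
          simp only [Finset.mem_image, Finset.mem_range] at hm
          push_neg at hm
          by_cases h1 : m < (a:ℤ) + M
          · by_cases h2 : (a:ℤ) ≤ m
            · exfalso
              exact hm (m - (a:ℤ)).toNat (by omega) (by omega)
            · simp only [hbad, shiftedNB, if_neg h2, if_pos h1]
          · simp only [hbad, if_neg h1]
        rw [tsum_eq_sum h0, Finset.sum_image (fun k _ k' _ h => by omega)]
        refine Finset.sum_congr rfl fun k hk => ?_
        have hk1 : ((a:ℤ) + k) < (a:ℤ) + M := by
          have := Finset.mem_range.mp hk; omega
        have hk2 : (a:ℤ) ≤ (a:ℤ) + k := by omega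
        simp only [hbad, shiftedNB, if_pos hk1, if_pos hk2]
        have htn : ((a:ℤ) + k - (a:ℤ)).toNat = k := by omega
        rw [htn]
      have hstep3 : ∑ k ∈ Finset.range M, ENNReal.ofReal (nbPMF r p k) =
          ENNReal.ofReal (∑ k ∈ Finset.range M, nbPMF r p k) :=
        (ENNReal.ofReal_sum_of_nonneg (fun k _ => (nbPMF_pos hr0 hp0 hp1 k).le)).symm
      have hstep4 : ∑ k ∈ Finset.range M, nbPMF r p k ≤ δ := by
        refine (nbPMF_sum_le hr1 hp0 hp1 M).trans ?_
        have hpinv : p⁻¹ = Real.exp (0.2 * ε / Δ) := by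
          rw [hp, ← Real.exp_neg, neg_neg]
        have e1 : p⁻¹ ^ M = Real.exp ((M:ℝ) * (0.2 * ε / Δ)) := by
          rw [hpinv, Real.exp_nat_mul]
        have h18 : Real.exp 0.55 ≤ 1 + p := by
          have := Real.add_one_le_exp (-(0.2 * ε / Δ))
          have hple : (1:ℝ) - 0.2 * ε / Δ ≤ p := by rw [hp]; linarith
          linarith [exp_55_le]
        have e2 : (1 + p) ^ (-r) ≤ Real.exp (-(0.55 * r)) := by
          rw [Real.rpow_neg (by linarith), Real.exp_neg]
          apply inv_anti₀ (Real.exp_pos _)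
          calc Real.exp (0.55 * r) = Real.exp 0.55 ^ r := Real.exp_mul 0.55 r
            _ ≤ (1 + p) ^ r := Real.rpow_le_rpow (Real.exp_nonneg _) h18 hr0.le
        calc p⁻¹ ^ M * (1 + p) ^ (-r)
            ≤ Real.exp ((M:ℝ) * (0.2 * ε / Δ)) * Real.exp (-(0.55 * r)) := by
              rw [e1]
              exact mul_le_mul_of_nonneg_left e2 (Real.exp_nonneg _)
          _ = Real.exp ((M:ℝ) * (0.2 * ε / Δ) - 0.55 * r) := by rw [← Real.exp_add]; ring_nf
          _ ≤ Real.exp (Real.log δ) := by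
              apply Real.exp_le_exp.mpr
              have hlogδ : Real.log δ = -L := by
                rw [hL, one_div, Real.log_inv]; ring
              have hMle : (M:ℝ) ≤ r * Δ / ε + 1 + Δ := by
                rw [hM]
                push_cast
                linarith
              have hmul : (M:ℝ) * (0.2 * ε / Δ) ≤ 0.2 * r + 0.2 * (ε / Δ) + 0.2 * ε := by
                have := mul_le_mul_of_nonneg_right hMle hx0pos.le
                refine this.trans (le_of_eq ?_)
                field_simp
              have hεΔ : ε / Δ ≤ 1 := by
                rw [div_le_one hΔ0]; linarith
              rw [hlogδ, hr]
              nlinarith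
          _ = δ := Real.exp_log hδ0
      rw [hstep2, hstep3] at hstep1
      exact hstep1.trans (ENNReal.ofReal_le_ofReal hstep4)
    calc setProb (shiftedNB r p a) S
        ≤ ∑' m : S, (ENNReal.ofReal (Real.exp ε) * shiftedNB r p a' m + bad m) :=
          ENNReal.tsum_le_tsum fun m => hpt m
      _ = (∑' m : S, ENNReal.ofReal (Real.exp ε) * shiftedNB r p a' m) + ∑' m : S, bad m :=
          ENNReal.tsum_add
      _ = ENNReal.ofReal (Real.exp ε) * setProb (shiftedNB r p a') S + ∑' m : S, bad m := by
          rw [ENNReal.tsum_mul_left]; rfl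
      _ ≤ _ := add_le_add_right hbadsum _
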